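/- Assume the continuum hypothesis fails, i.e., 2^ℵ₀ > ℵ₁. Then the σ-ideal I* does not have property (M): there is no Borel measurable function f : Tr → Tr such that f⁻¹[{T}] ∉ I* for every T ∈ Tr. -/

import Mathlib

open Set MeasureTheory

/-- A subtree of `ω^{<ω}`: a set of finite sequences of naturals closed under
initial segments (prefixes). -/
def IsTree (T : Set (List ℕ)) : Prop := ∀ s ∈ T, ∀ t : List ℕ, t <+: s → t ∈ T

/-- `T` has an infinite branch. -/
def HasInfiniteBranch (T : Set (List ℕ)) : Prop :=
  ∃ x : ℕ → ℕ, ∀ n : ℕ, (List.range n).map x ∈ T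

/-- A well-founded tree: a subtree of `ω^{<ω}` with no infinite branch. -/
def IsWFTree (T : Set (List ℕ)) : Prop := IsTree T ∧ ¬ HasInfiniteBranch T

/-- The child relation of `T`: `childRel T s t` iff `s = t⌢⟨m⟩ ∈ T` for some `m`. -/
def childRel (T : Set (List ℕ)) (s t : List ℕ) : Prop := s ∈ T ∧ ∃ m : ℕ, s = t ++ [m]

/-- The canonical rank function of a well-founded tree:
`h_T ν = sup { h_T (ν⌢⟨m⟩) + 1 : ν⌢⟨m⟩ ∈ T }`. -/
noncomputable def treeRank (T : Set (List ℕ)) (ν : List ℕ) : Ordinal :=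
  @dite _ (WellFounded (childRel T)) (Classical.dec _) (fun h => (h.apply ν).rank) (fun _ => 0)

/-- `A_α`: the well-founded trees containing `⟨⟩` whose canonical rank at `⟨⟩` is `α`. -/
def Atree (α : Ordinal) : Set (Set (List ℕ)) :=
  {T | IsWFTree T ∧ [] ∈ T ∧ treeRank T [] = α}

/-- `n^{≤ n}`: the finite sequences of length at most `n` with all entries `< n`. -/
def seqBelow (n : ℕ) : Set (List ℕ) := {l | l.length ≤ n ∧ ∀ x ∈ l, x < n}

/-- The basic τ_α-open set `U(n,T)` determined by `n ∈ ℕ` and `T ∈ A_α`. -/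
def Unbhd (α : Ordinal) (n : ℕ) (T : ↥(Atree α)) : Set (↥(Atree α)) :=
  {T' | T'.1 ∩ seqBelow n = T.1 ∩ seqBelow n ∧
    ∀ ν ∈ T.1 ∩ seqBelow n, treeRank T'.1 ν = treeRank T.1 ν}

/-- The topology `τ_α` on `A_α`, generated by the sets `U(n,T)`. -/
def tauTop (α : Ordinal) : TopologicalSpace ↥(Atree α) :=
  TopologicalSpace.generateFrom {s | ∃ (n : ℕ) (T : ↥(Atree α)), s = Unbhd α n T}

/-- The standard (product) topology on `2^{ω^{<ω}}`, i.e. on `Set (List ℕ)`: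
generated by the subbasic clopen cylinders `{T | l ∈ T}` and `{T | l ∉ T}`. -/
def cylTop : TopologicalSpace (Set (List ℕ)) :=
  TopologicalSpace.generateFrom
    ({s | ∃ l : List ℕ, s = {T : Set (List ℕ) | l ∈ T}} ∪
     {s | ∃ l : List ℕ, s = {T : Set (List ℕ) | l ∉ T}})

/-- The Polish space `Tr` of all subtrees of `ω^{<ω}`. -/
def Tr : Type := {T : Set (List ℕ) // IsTree T}

/-- The standard topology of `Tr`: the subspace topology from `2^{ω^{<ω}}`. -/
def trTop : TopologicalSpace Tr := TopologicalSpace.induced Subtype.val cylTop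

/-- The copy in `A_α` of a set `B ⊆ Tr`, i.e. the set `B ∩ A_α` viewed as a subset of
the space `⟨A_α, τ_α⟩`. -/
def restrictA (α : Ordinal) (B : Set Tr) : Set ↥(Atree α) :=
  {T | (⟨T.1, T.2.1.1⟩ : Tr) ∈ B}

/-- The σ-ideal `I*` on `Tr`: `E ∈ I*` iff there is a Borel set `B ⊇ E` (in the
standard topology of `Tr`) such that `B ∩ A_α` is τ_α-meager for every countable
ordinal `α > 0`. -/
def memIstar (E : Set Tr) : Prop :=
  ∃ B : Set Tr, E ⊆ B ∧ MeasurableSet[@borel Tr trTop] B ∧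
    ∀ α : Ordinal, 0 < α → α.card ≤ Cardinal.aleph0 →
      @IsMeagre ↥(Atree α) (tauTop α) (restrictA α B)


section Aux

open TopologicalSpace

/-- The generating family of `τ_α`. -/
abbrev Bas (α : Ordinal) : Set (Set ↥(Atree α)) :=
  {s | ∃ (n : ℕ) (T : ↥(Atree α)), s = Unbhd α n T}

lemma self_mem_Unbhd (α : Ordinal) (n : ℕ) (T : ↥(Atree α)) : T ∈ Unbhd α n T :=
  ⟨rfl, fun _ _ => rfl⟩

lemma seqBelow_mono {n m : ℕ} (h : n ≤ m) : seqBelow n ⊆ seqBelow m :=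
  fun _ hl => ⟨hl.1.trans h, fun x hx => lt_of_lt_of_le (hl.2 x hx) h⟩

lemma Unbhd_subset_of_mem {α : Ordinal} {n : ℕ} {T T' : ↥(Atree α)}
    (h : T' ∈ Unbhd α n T) : Unbhd α n T' ⊆ Unbhd α n T := by
  rintro y ⟨h1, h2⟩
  refine ⟨h1.trans h.1, fun ν hν => ?_⟩
  have hν' : ν ∈ T'.1 ∩ seqBelow n := by rw [h.1]; exact hν
  exact (h2 ν hν').trans (h.2 ν hν)

lemma Unbhd_anti {α : Ordinal} {n m : ℕ} (h : n ≤ m) (T : ↥(Atree α)) :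
    Unbhd α m T ⊆ Unbhd α n T := by
  rintro y ⟨h1, h2⟩
  have hss : seqBelow m ∩ seqBelow n = seqBelow n :=
    inter_eq_self_of_subset_right (seqBelow_mono h)
  constructor
  · calc y.1 ∩ seqBelow n = (y.1 ∩ seqBelow m) ∩ seqBelow n := by rw [inter_assoc, hss]
    _ = (T.1 ∩ seqBelow m) ∩ seqBelow n := by rw [h1]
    _ = T.1 ∩ seqBelow n := by rw [inter_assoc, hss]
  · exact fun ν hν => h2 ν ⟨hν.1, seqBelow_mono h hν.2⟩

lemma generateOpen_of_forall_basic {α : Ordinal} {s : Set ↥(Atree α)}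
    (h : ∀ x ∈ s, ∃ n, Unbhd α n x ⊆ s) : GenerateOpen (Bas α) s := by
  have hs : s = ⋃₀ {b | b ∈ Bas α ∧ b ⊆ s} := by
    apply Subset.antisymm
    · intro x hx
      obtain ⟨n, hn⟩ := h x hx
      exact ⟨Unbhd α n x, ⟨⟨n, x, rfl⟩, hn⟩, self_mem_Unbhd α n x⟩
    · exact sUnion_subset fun b hb => hb.2
  rw [hs]
  exact .sUnion _ fun b hb => .basic b hb.1

lemma le_foldr_max (l : List ℕ) : ∀ x ∈ l, x ≤ l.foldr max 0 := by
  induction l with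
  | nil => simp
  | cons a t ih =>
    intro x hx
    rcases List.mem_cons.mp hx with rfl | h
    · exact le_max_left _ _
    · exact (ih x h).trans (le_max_right _ _)

lemma mem_seqBelow_self (l : List ℕ) : l ∈ seqBelow (max l.length (l.foldr max 0 + 1)) :=
  ⟨le_max_left _ _, fun x hx =>
    lt_of_lt_of_le (Nat.lt_succ_of_le (le_foldr_max l x hx)) (le_max_right _ _)⟩

lemma generateOpen_memCyl (α : Ordinal) (l : List ℕ) :
    GenerateOpen (Bas α) {x : ↥(Atree α) | l ∈ x.1} := by
  apply generateOpen_of_forall_basic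
  intro x hx
  refine ⟨max l.length (l.foldr max 0 + 1), fun y hy => ?_⟩
  have hmem : l ∈ y.1 ∩ seqBelow (max l.length (l.foldr max 0 + 1)) := by
    rw [hy.1]; exact ⟨hx, mem_seqBelow_self l⟩
  exact hmem.1

lemma generateOpen_notMemCyl (α : Ordinal) (l : List ℕ) :
    GenerateOpen (Bas α) {x : ↥(Atree α) | l ∉ x.1} := by
  apply generateOpen_of_forall_basic
  intro x hx
  refine ⟨max l.length (l.foldr max 0 + 1), fun y hy hl => ?_⟩
  have hmem : l ∈ x.1 ∩ seqBelow (max l.length (l.foldr max 0 + 1)) := by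
    rw [← hy.1]; exact ⟨hl, mem_seqBelow_self l⟩
  exact hx hmem.1

lemma generateOpen_preimage (α : Ordinal) {w : Set (Set (List ℕ))}
    (hw : GenerateOpen
      ({s | ∃ l : List ℕ, s = {T : Set (List ℕ) | l ∈ T}} ∪
       {s | ∃ l : List ℕ, s = {T : Set (List ℕ) | l ∉ T}}) w) :
    GenerateOpen (Bas α) ((fun x : ↥(Atree α) => x.1) ⁻¹' w) := by
  induction hw with
  | basic u hu =>
    rcases hu with ⟨l, rfl⟩ | ⟨l, rfl⟩
    · exact generateOpen_memCyl α l
    · exact generateOpen_notMemCyl α l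
  | univ => rw [preimage_univ]; exact .univ
  | inter u v _ _ ihu ihv => rw [preimage_inter]; exact .inter _ _ ihu ihv
  | sUnion S _ ih =>
    rw [preimage_sUnion, ← sUnion_image]
    exact .sUnion _ (by rintro b ⟨t, ht, rfl⟩; exact ih t ht)

lemma measurable_incl (α : Ordinal) :
    @Measurable ↥(Atree α) Tr (@borel _ (tauTop α)) (@borel Tr trTop)
      (fun x => (⟨x.1, x.2.1.1⟩ : Tr)) := by
  letI : MeasurableSpace ↥(Atree α) := @borel _ (tauTop α)
  show @Measurable ↥(Atree α) Tr _
    (MeasurableSpace.generateFrom {s : Set Tr | @IsOpen Tr trTop s}) _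
  apply measurable_generateFrom
  rintro u hu
  obtain ⟨w, hw, rfl⟩ := (hu : ∃ w, cylTop.IsOpen w ∧ Subtype.val ⁻¹' w = u)
  show MeasurableSet[@borel _ (tauTop α)] _
  exact MeasurableSpace.measurableSet_generateFrom (generateOpen_preimage α hw)

lemma restrictA_measurable (α : Ordinal) (B : Set Tr)
    (hB : MeasurableSet[@borel Tr trTop] B) :
    MeasurableSet[@borel ↥(Atree α) (tauTop α)] (restrictA α B) :=
  measurable_incl α hB

lemma exists_basic_subset {α : Ordinal} {s : Set ↥(Atree α)}
    (hs : GenerateOpen (Bas α) s) : ∀ x ∈ s, ∃ n, Unbhd α n x ⊆ s := by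
  induction hs with
  | basic u hu =>
    rintro x hx
    obtain ⟨n, T, rfl⟩ := hu
    exact ⟨n, Unbhd_subset_of_mem hx⟩
  | univ => exact fun x _ => ⟨0, subset_univ _⟩
  | inter u v _ _ ihu ihv =>
    rintro x ⟨hxu, hxv⟩
    obtain ⟨n, hn⟩ := ihu x hxu
    obtain ⟨m, hm⟩ := ihv x hxv
    exact ⟨max n m, subset_inter ((Unbhd_anti (le_max_left _ _) x).trans hn)
      ((Unbhd_anti (le_max_right _ _) x).trans hm)⟩
  | sUnion S _ ih =>
    rintro x ⟨t, htS, hxt⟩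
    obtain ⟨n, hn⟩ := ih t htS x hxt
    exact ⟨n, hn.trans (subset_sUnion_of_mem htS)⟩

lemma treeRank_le {T : Set (List ℕ)} (hT : IsTree T) :
    ∀ ν ∈ T, treeRank T ν ≤ treeRank T [] := by
  intro ν
  induction ν using List.reverseRecOn with
  | nil => exact fun _ => le_rfl
  | append_singleton l m ih =>
    intro hν
    have hl : l ∈ T := hT _ hν _ ⟨[m], rfl⟩
    refine le_trans ?_ (ih hl)
    unfold treeRank
    split_ifs with h
    · exact le_of_lt ((h.apply l).rank_lt_of_rel ⟨hν, m, rfl⟩)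
    · exact le_rfl

lemma seqBelow_finite (n : ℕ) : (seqBelow n).Finite := by
  apply Set.Finite.subset
    ((List.finite_length_le (Fin n) n).image (List.map (Fin.val (n := n))))
  intro l hl
  refine ⟨l.pmap (fun x hx => (⟨x, hx⟩ : Fin n)) (fun x hx => hl.2 x hx), ?_, ?_⟩
  · simpa [List.length_pmap] using hl.1
  · rw [List.map_pmap]
    simp [List.pmap_eq_map]

lemma countable_Iic_ord {α : Ordinal} (hα : α.card ≤ Cardinal.aleph0) :
    Countable ↥(Set.Iic α) := by
  have h1 : Cardinal.mk ((α + 1).ToType) ≤ Cardinal.aleph0 := by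
    rw [Cardinal.mk_toType, Ordinal.card_add, Ordinal.card_one]
    calc α.card + 1 ≤ Cardinal.aleph0 + 1 := add_le_add_left hα 1
    _ = Cardinal.aleph0 := Cardinal.add_one_of_aleph0_le le_rfl
  haveI : Countable ((α + 1).ToType) := Cardinal.mk_le_aleph0_iff.mp h1
  have hf : Function.Injective (fun β : ↥(Set.Iic α) =>
      (Ordinal.ToType.mk (o := α + 1))
        ⟨β.1, by rw [Ordinal.add_one_eq_succ]; exact Order.lt_succ_iff.mpr (Set.mem_Iic.mp β.2)⟩) := by
    intro a b hab
    have h3 := (Ordinal.ToType.mk (o := α + 1)).injective hab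
    exact Subtype.ext (Subtype.mk_eq_mk.mp h3)
  exact hf.countable

lemma countable_basics (α : Ordinal) (hα : α.card ≤ Cardinal.aleph0) :
    (Bas α).Countable := by
  classical
  haveI : Countable ↥(Set.Iic α) := countable_Iic_ord hα
  haveI : ∀ n : ℕ, Finite ↥(seqBelow n) := fun n => (seqBelow_finite n).to_subtype
  let C := (n : ℕ) × (↥(seqBelow n) → Option ↥(Set.Iic α))
  haveI : Countable C := by infer_instance
  let c : ℕ × ↥(Atree α) → C := fun p =>
    ⟨p.1, fun l => if h : l.1 ∈ p.2.1 then
      some ⟨treeRank p.2.1 l.1, by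
        exact Set.mem_Iic.mpr
          (le_of_le_of_eq (treeRank_le p.2.2.1.1 l.1 h) p.2.2.2.2)⟩ else none⟩
  have key : ∀ p q : ℕ × ↥(Atree α), c p = c q →
      Unbhd α p.1 p.2 = Unbhd α q.1 q.2 := by
    rintro ⟨n, T⟩ ⟨m, S⟩ hpq
    obtain ⟨hnm, hfun⟩ := Sigma.mk.inj_iff.mp hpq
    subst hnm
    replace hfun := eq_of_heq hfun
    have hiff : ∀ l (hl : l ∈ seqBelow n), (l ∈ T.1 ↔ l ∈ S.1) ∧
        (∀ (h1 : l ∈ T.1) (h2 : l ∈ S.1), treeRank T.1 l = treeRank S.1 l) := by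
      intro l hl
      have key2 := congrFun hfun ⟨l, hl⟩
      by_cases h1 : l ∈ T.1 <;> by_cases h2 : l ∈ S.1
      · rw [dif_pos h1, dif_pos h2] at key2
        exact ⟨iff_of_true h1 h2, fun _ _ => congrArg Subtype.val (Option.some.inj key2)⟩
      · rw [dif_pos h1, dif_neg h2] at key2
        exact absurd key2 (Option.some_ne_none _)
      · rw [dif_neg h1, dif_pos h2] at key2
        exact absurd key2.symm (Option.some_ne_none _)
      · exact ⟨iff_of_false h1 h2, fun h _ => absurd h h1⟩
    have hTS : T.1 ∩ seqBelow n = S.1 ∩ seqBelow n := by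
      ext l
      constructor
      · rintro ⟨h1, h2⟩; exact ⟨((hiff l h2).1).mp h1, h2⟩
      · rintro ⟨h1, h2⟩; exact ⟨((hiff l h2).1).mpr h1, h2⟩
    have hrk : ∀ ν ∈ T.1 ∩ seqBelow n, treeRank T.1 ν = treeRank S.1 ν := by
      rintro ν ⟨h1, h2⟩
      exact (hiff ν h2).2 h1 (((hiff ν h2).1).mp h1)
    ext T'
    constructor
    · rintro ⟨h1, h2⟩
      refine ⟨h1.trans hTS, fun ν hν => ?_⟩
      have hν' : ν ∈ T.1 ∩ seqBelow n := by rw [hTS]; exact hν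
      exact (h2 ν hν').trans (hrk ν hν')
    · rintro ⟨h1, h2⟩
      refine ⟨h1.trans hTS.symm, fun ν hν => ?_⟩
      have hν' : ν ∈ S.1 ∩ seqBelow n := by rw [← hTS]; exact hν
      exact (h2 ν hν').trans (hrk ν (by rw [hTS]; exact hν')).symm
  let G : C → Set ↥(Atree α) := fun d =>
    if h : ∃ p, c p = d then Unbhd α (Classical.choose h).1 (Classical.choose h).2 else ∅
  have hsub : Bas α ⊆ Set.range G := by
    rintro b ⟨n, T, rfl⟩
    refine ⟨c (n, T), ?_⟩
    have h : ∃ p, c p = c (n, T) := ⟨(n, T), rfl⟩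
    simp only [G, dif_pos h]
    exact key _ _ (Classical.choose_spec h)
  exact (Set.countable_range G).mono hsub

lemma isMeagre_union' {X : Type*} [TopologicalSpace X] {s t : Set X}
    (hs : IsMeagre s) (ht : IsMeagre t) : IsMeagre (s ∪ t) := by
  rw [IsMeagre, compl_union]; exact Filter.inter_mem hs ht

lemma isMeagre_sUnion' {X : Type*} [TopologicalSpace X] {S : Set (Set X)}
    (hS : S.Countable) (h : ∀ s ∈ S, IsMeagre s) : IsMeagre (⋃₀ S) := by
  haveI := hS.to_subtype
  rw [sUnion_eq_iUnion, IsMeagre, compl_iUnion]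
  exact countable_iInter_mem.mpr fun s => h s s.2

lemma meager_of_two {X : Type*} [TopologicalSpace X] {b s s' : Set X}
    (h1 : IsMeagre (b \ s)) (h2 : IsMeagre (b \ s')) (hss : s ∩ s' = ∅) :
    IsMeagre b := by
  have hsub : b ⊆ (b \ s) ∪ (b \ s') := by
    intro x hx
    by_cases hxs : x ∈ s
    · refine Or.inr ⟨hx, fun hx' => ?_⟩
      have : x ∈ s ∩ s' := ⟨hxs, hx'⟩
      rw [hss] at this
      exact this
    · exact Or.inl ⟨hx, hxs⟩
  exact (isMeagre_union' h1 h2).mono hsub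

lemma exists_nonmeager_basic {α : Ordinal} (hα : α.card ≤ Cardinal.aleph0)
    {u : Set ↥(Atree α)} (hu : GenerateOpen (Bas α) u)
    (hnm : ¬ @IsMeagre _ (tauTop α) u) :
    ∃ b ∈ Bas α, b ⊆ u ∧ ¬ @IsMeagre _ (tauTop α) b := by
  letI : TopologicalSpace ↥(Atree α) := tauTop α
  by_contra hcon
  push_neg at hcon
  apply hnm
  have hcov : u ⊆ ⋃₀ {b | b ∈ Bas α ∧ b ⊆ u} := by
    intro x hx
    obtain ⟨n, hn⟩ := exists_basic_subset hu x hx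
    exact ⟨Unbhd α n x, ⟨⟨n, x, rfl⟩, hn⟩, self_mem_Unbhd α n x⟩
  exact ((isMeagre_sUnion' ((countable_basics α hα).mono (fun b hb => hb.1))
    (fun b hb => hcon b hb.1 hb.2)).mono hcov)

/-- The embedding of `Set ℕ` into `Tr`. -/
def setTree (S : Set ℕ) : Set (List ℕ) := {l | l = [] ∨ ∃ n ∈ S, l = [n]}

lemma setTree_isTree (S : Set ℕ) : IsTree (setTree S) := by
  rintro s hs t ht
  rcases hs with rfl | ⟨n, hn, rfl⟩
  · left; exact List.prefix_nil.mp ht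
  · rcases ht with ⟨r, hr⟩
    cases t with
    | nil => left; rfl
    | cons a t' =>
      right
      have h1 : a = n ∧ t' ++ r = [] := by
        constructor
        · exact (List.cons.injEq a (t' ++ r) n []).mp hr |>.1
        · exact (List.cons.injEq a (t' ++ r) n []).mp hr |>.2
      obtain ⟨rfl, h2⟩ := h1
      obtain ⟨rfl, -⟩ := List.append_eq_nil_iff.mp h2
      exact ⟨a, hn, rfl⟩

lemma mem_setTree_single (S : Set ℕ) (n : ℕ) : [n] ∈ setTree S ↔ n ∈ S := by
  simp [setTree]

lemma setTree_inj : Function.Injective (fun S => (⟨setTree S, setTree_isTree S⟩ : Tr)) := by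
  intro S S' h
  have h2 : setTree S = setTree S' := congrArg Subtype.val h
  ext n
  rw [← mem_setTree_single S n, ← mem_setTree_single S' n, h2]

universe uu

lemma liftContra (h : (2 : Cardinal.{0}) ^ Cardinal.aleph0 ≤ Cardinal.aleph 1) :
    (2 : Cardinal.{uu}) ^ Cardinal.aleph0 ≤ Cardinal.aleph 1 := by
  have h2 := Cardinal.lift_le.{uu}.mpr h
  rwa [Cardinal.lift_two_power, Cardinal.lift_aleph0, Cardinal.lift_aleph,
    Ordinal.lift_one] at h2

end Aux

/-- If the continuum hypothesis fails, then `I*` does not have property (M): there is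
no Borel function `f : Tr → Tr` all of whose fibers are `I*`-positive. -/
theorem stmt12 (hCH : Cardinal.aleph 1 < 2 ^ Cardinal.aleph0) :
    ¬ ∃ f : Tr → Tr, @Measurable Tr Tr (@borel Tr trTop) (@borel Tr trTop) f ∧
      ∀ T : Tr, ¬ memIstar (f ⁻¹' {T}) := by
  classical
  rintro ⟨f, hf, hfib⟩
  -- cylinders are measurable in `Tr`
  have hcylm : ∀ l : List ℕ, MeasurableSet[@borel Tr trTop] {x : Tr | l ∈ x.1} := by
    intro l
    show MeasurableSet[MeasurableSpace.generateFrom {s : Set Tr | @IsOpen Tr trTop s}] _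
    apply MeasurableSpace.measurableSet_generateFrom
    show @IsOpen Tr trTop _
    exact (⟨{T | l ∈ T}, TopologicalSpace.GenerateOpen.basic _ (Or.inl ⟨l, rfl⟩), rfl⟩ :
      ∃ w, cylTop.IsOpen w ∧ Subtype.val ⁻¹' w = {x : Tr | l ∈ x.1})
  have hcylm' : ∀ l : List ℕ, MeasurableSet[@borel Tr trTop] {x : Tr | l ∉ x.1} := by
    intro l
    show MeasurableSet[MeasurableSpace.generateFrom {s : Set Tr | @IsOpen Tr trTop s}] _
    apply MeasurableSpace.measurableSet_generateFrom
    show @IsOpen Tr trTop _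
    exact (⟨{T | l ∉ T}, TopologicalSpace.GenerateOpen.basic _ (Or.inr ⟨l, rfl⟩), rfl⟩ :
      ∃ w, cylTop.IsOpen w ∧ Subtype.val ⁻¹' w = {x : Tr | l ∉ x.1})
  -- singletons are measurable in `Tr`
  have hsing : ∀ t : Tr, MeasurableSet[@borel Tr trTop] {t} := by
    intro t
    have hset : ({t} : Set Tr) =
        ⋂ l : List ℕ, if l ∈ t.1 then {x : Tr | l ∈ x.1} else {x : Tr | l ∉ x.1} := by
      ext x
      simp only [mem_singleton_iff, mem_iInter]
      constructor
      · rintro rfl l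
        split_ifs with h
        · exact h
        · exact h
      · intro h
        apply Subtype.ext
        ext l
        have hl := h l
        by_cases hlt : l ∈ t.1
        · rw [if_pos hlt] at hl
          exact ⟨fun _ => hlt, fun _ => hl⟩
        · rw [if_neg hlt] at hl
          exact ⟨fun hx => absurd hx hl, fun ht' => absurd ht' hlt⟩
    rw [hset]
    exact MeasurableSet.iInter fun l => by
      split_ifs with h
      · exact hcylm l
      · exact hcylm' l
  -- for each `t`, pick a level `α` and a non-meager basic set witnessing positivity
  have main : ∀ t : Tr, ∃ α : Ordinal, α.card ≤ Cardinal.aleph0 ∧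
      ∃ b : Set ↥(Atree α), b ∈ Bas α ∧ ¬ @IsMeagre _ (tauTop α) b ∧
        @IsMeagre _ (tauTop α) (b \ restrictA α (f ⁻¹' {t})) := by
    intro t
    have hBorel : MeasurableSet[@borel Tr trTop] (f ⁻¹' {t}) := hf (hsing t)
    have hnall : ¬ ∀ α : Ordinal, 0 < α → α.card ≤ Cardinal.aleph0 →
        @IsMeagre _ (tauTop α) (restrictA α (f ⁻¹' {t})) :=
      fun hall => hfib t ⟨f ⁻¹' {t}, subset_rfl, hBorel, hall⟩
    push_neg at hnall
    obtain ⟨α, hα0, hαc, hnm⟩ := hnall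
    letI : TopologicalSpace ↥(Atree α) := tauTop α
    letI : MeasurableSpace ↥(Atree α) := borel _
    haveI : BorelSpace ↥(Atree α) := ⟨rfl⟩
    have hmeas : MeasurableSet (restrictA α (f ⁻¹' {t})) :=
      restrictA_measurable α _ hBorel
    obtain ⟨u, huo, hue⟩ := hmeas.baireMeasurableSet.residualEq_isOpen
    set s := restrictA α (f ⁻¹' {t}) with hs
    have hm1 : IsMeagre (u \ s) := by
      rw [IsMeagre]
      refine Filter.mem_of_superset hue fun x hx => ?_
      exact fun hmem => hmem.2 (Eq.mpr hx hmem.1)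
    have hm2 : IsMeagre (s \ u) := by
      rw [IsMeagre]
      refine Filter.mem_of_superset hue fun x hx => ?_
      exact fun hmem => hmem.2 (Eq.mp hx hmem.1)
    have hunm : ¬ IsMeagre u := by
      intro hmu
      apply hnm
      refine (isMeagre_union' hmu hm2).mono fun x hx => ?_
      by_cases hxu : x ∈ u
      · exact Or.inl hxu
      · exact Or.inr ⟨hx, hxu⟩
    obtain ⟨b, hbB, hbu, hbnm⟩ := exists_nonmeager_basic hαc
      (show TopologicalSpace.GenerateOpen (Bas α) u from huo) hunm
    exact ⟨α, hαc, b, hbB, hbnm, hm1.mono (diff_subset_diff_left hbu)⟩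
  choose A hAcard B hB1 hB2 hB3 using main
  -- countable encodings of the basic sets at each level
  have hexe : ∀ α : Ordinal, ∃ e : Set ↥(Atree α) → ℕ,
      α.card ≤ Cardinal.aleph0 → Set.InjOn e (Bas α) := by
    intro α
    by_cases h : α.card ≤ Cardinal.aleph0
    · haveI := (countable_basics α h).to_subtype
      obtain ⟨e0, he0⟩ := (countable_iff_exists_injective ↥(Bas α)).mp inferInstance
      classical
      refine ⟨fun b => if hb : b ∈ Bas α then e0 ⟨b, hb⟩ else 0, fun _ => ?_⟩
      intro b hb b' hb' hbe
      simp only [dif_pos hb, dif_pos hb'] at hbe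
      exact congrArg Subtype.val (he0 hbe)
    · exact ⟨fun _ => 0, fun hc => absurd hc h⟩
  choose e he using hexe
  have hmem : ∀ t : Tr, A t ∈ Set.Iio (Cardinal.aleph 1).ord := fun t =>
    Cardinal.lt_ord.mpr (lt_of_le_of_lt (hAcard t) Cardinal.aleph0_lt_aleph_one)
  -- the coding map is injective
  have hFinj : Function.Injective
      (fun t : Tr => ((⟨A t, hmem t⟩ : ↥(Set.Iio (Cardinal.aleph 1).ord)),
        e (A t) (B t))) := by
    intro t t' htt
    by_contra hne
    have h1 : A t = A t' := congrArg (fun p => p.1.1) htt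
    have h2 : e (A t) (B t) = e (A t') (B t') := congrArg Prod.snd htt
    clear htt
    have hB1' := hB1 t'
    have hB2' := hB2 t'
    have hB3' := hB3 t'
    have hAcard' := hAcard t'
    have hdisj : restrictA (A t) (f ⁻¹' {t}) ∩ restrictA (A t) (f ⁻¹' {t'}) = ∅ := by
      ext x
      simp only [mem_inter_iff, mem_empty_iff_false, iff_false]
      rintro ⟨hx1, hx2⟩
      exact hne ((Set.mem_singleton_iff.mp hx1).symm.trans (Set.mem_singleton_iff.mp hx2))
    revert hB1' hB2' hB3' h2
    generalize B t' = b'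
    revert b'
    generalize hg : A t' = α'
    have h1' : A t = α' := h1.trans hg
    subst h1'
    intro b' h2 hB1' hB2' hB3'
    have hbb : B t = b' := he (A t) (hAcard t) (hB1 t) hB1' h2
    subst hbb
    letI : TopologicalSpace ↥(Atree (A t)) := tauTop (A t)
    exact hB2 t (meager_of_two (hB3 t) hB3' hdisj)
  -- cardinality contradiction
  have hTr : (2 : Cardinal) ^ Cardinal.aleph0 ≤ Cardinal.mk Tr := by
    have h := Cardinal.mk_le_of_injective setTree_inj
    rwa [Cardinal.mk_set, Cardinal.mk_nat] at h
  have hle : Cardinal.lift.{1} (Cardinal.mk Tr) ≤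
      Cardinal.lift.{0} (Cardinal.mk (↥(Set.Iio ((Cardinal.aleph 1 : Cardinal.{0})).ord) × ℕ)) :=
    Cardinal.lift_mk_le'.mpr ⟨⟨_, hFinj⟩⟩
  have hcodom : Cardinal.mk (↥(Set.Iio ((Cardinal.aleph 1 : Cardinal.{0})).ord) × ℕ) =
      Cardinal.lift.{1} (Cardinal.aleph 1 : Cardinal.{0}) := by
    rw [Cardinal.mk_prod, Ordinal.mk_Iio_ordinal, Cardinal.card_ord, Cardinal.mk_nat,
      Cardinal.lift_aleph0, Cardinal.lift_uzero]
    exact Cardinal.mul_eq_left (Cardinal.aleph0_le_lift.mpr (Cardinal.aleph0_le_aleph 1))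
      (Cardinal.aleph0_le_lift.mpr (Cardinal.aleph0_le_aleph 1)) Cardinal.aleph0_ne_zero
  rw [Cardinal.lift_uzero, hcodom, Cardinal.lift_le] at hle
  exact hCH.not_ge (liftContra (hTr.trans hle))
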